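/- Let R be a finite commutative ring and n a positive integer with n·1_R = 0. Let S be a symmetric subset of R such that for every integer k coprime to n, the image of S under the map x ↦ k·x (integer scalar multiplication) equals S. Then for every additive character χ of R, the sum Σ_{s∈S} χ(s) is a rational integer; consequently every eigenvalue of the Cayley graph Γ(R,S) is an integer, i.e. Γ(R,S) is an integral graph. -/

import Mathlib

open Polynomial

/-- Let `R` be a finite commutative ring and `n` a positive integer
with `n·1_R = 0`. Let `S` be a symmetric subset of `R` such that for every integer `k`
coprime to `n`, the image of `S` under `x ↦ k·x` equals `S`. Then for every additive
character `χ` of `R`, the sum `Σ_{s∈S} χ(s)` is a rational integer; hence every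
eigenvalue of the Cayley graph `Γ(R,S)` is an integer, i.e. `Γ(R,S)` is integral. -/
theorem stmt12 {R : Type*} [CommRing R] [Fintype R] [DecidableEq R]
    (n : ℕ) (hn : 0 < n) (hchar : (n : R) = 0)
    (S : Finset R) (hSsymm : ∀ s ∈ S, -s ∈ S) (hS0 : (0 : R) ∉ S)
    (hstable : ∀ k : ℤ, IsCoprime k (n : ℤ) →
      Finset.image (fun x : R => k • x) S = S) :
    ∀ χ : AddChar R ℂ, ∃ z : ℤ, ∑ s ∈ S, χ s = (z : ℂ) := by
  intro χ
  haveI : NeZero n := ⟨hn.ne'⟩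
  have hroot : ∀ s : R, χ s ^ n = 1 := by
    intro s
    rw [← AddChar.map_nsmul_eq_pow]
    have h0 : n • s = 0 := by rw [nsmul_eq_mul, hchar, zero_mul]
    rw [h0, AddChar.map_zero_eq_one]
  set N : ℕ+ := ⟨n, hn⟩ with hN
  set L := CyclotomicField N ℚ with hLdef
  haveI : IsCyclotomicExtension {(N : ℕ)} ℚ L := by
    haveI : NeZero ((N : ℕ) : ℚ) := ⟨Nat.cast_ne_zero.mpr hn.ne'⟩; exact CyclotomicField.isCyclotomicExtension (N : ℕ) ℚ
  haveI := IsCyclotomicExtension.finiteDimensional {(N : ℕ)} ℚ L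
  haveI : Algebra.IsAlgebraic ℚ L := Algebra.IsAlgebraic.of_finite ℚ L
  let φ : L →ₐ[ℚ] ℂ := IsAlgClosed.lift
  have hφinj : Function.Injective φ := φ.toRingHom.injective
  set ζ : L := IsCyclotomicExtension.zeta N ℚ L with hζdef
  have hζ : IsPrimitiveRoot ζ n := IsCyclotomicExtension.zeta_spec N ℚ L
  have hξ : IsPrimitiveRoot (φ ζ) n := hζ.map_of_injective hφinj
  have hj : ∀ s : R, ∃ i : ℕ, φ ζ ^ i = χ s := fun s => by
    obtain ⟨i, _, hi⟩ := hξ.eq_pow_of_pow_eq_one (hroot s); exact ⟨i, hi⟩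
  choose j hjs using hj
  set t : L := ∑ s ∈ S, ζ ^ j s with htdef
  have hφt : φ t = ∑ s ∈ S, χ s := by
    rw [htdef, map_sum]
    exact Finset.sum_congr rfl fun s _ => by rw [map_pow]; exact hjs s
  haveI := IsCyclotomicExtension.isGalois {(N : ℕ)} ℚ L
  have hfix : ∀ σ : L ≃ₐ[ℚ] L, σ t = t := by
    intro σ
    have hσζ : IsPrimitiveRoot (σ ζ) n := hζ.map_of_injective σ.injective
    obtain ⟨m, hmn, hm⟩ := hζ.eq_pow_of_pow_eq_one hσζ.pow_eq_one
    have hcop : Nat.Coprime m n := (hζ.pow_iff_coprime hn m).mp (hm ▸ hσζ)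
    apply hφinj
    rw [hφt]
    have h1 : φ (σ t) = ∑ s ∈ S, χ s ^ m := by
      rw [htdef, map_sum, map_sum]
      refine Finset.sum_congr rfl fun s _ => ?_
      rw [map_pow, ← hm, ← pow_mul, mul_comm, pow_mul, map_pow, map_pow, hjs s]
    rw [h1]
    have hcopZ : IsCoprime (m : ℤ) (n : ℤ) := by
      rw [Nat.isCoprime_iff_coprime]; exact hcop
    have him := hstable m hcopZ
    have hinj : Set.InjOn (fun x : R => (m : ℤ) • x) S :=
      Finset.injOn_of_card_image_eq (by rw [him])
    calc ∑ s ∈ S, χ s ^ m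
        = ∑ s ∈ S, χ ((m : ℤ) • s) := by
          refine Finset.sum_congr rfl fun s _ => ?_
          rw [AddChar.map_zsmul_eq_zpow, zpow_natCast]
      _ = ∑ y ∈ Finset.image (fun x : R => (m : ℤ) • x) S, χ y :=
          (Finset.sum_image fun a ha b hb h => hinj ha hb h).symm
      _ = ∑ s ∈ S, χ s := by rw [him]
  have hbot : t ∈ (⊥ : IntermediateField ℚ L) := by
    rw [← IsGalois.fixedField_fixingSubgroup (⊥ : IntermediateField ℚ L)]
    exact fun σ => hfix σ
  obtain ⟨q, hq⟩ := IntermediateField.mem_bot.mp hbot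
  have hTq : ∑ s ∈ S, χ s = (q : ℂ) := by
    rw [← hφt, ← hq, AlgHom.commutes]
    norm_cast
  have hint : IsIntegral ℤ (∑ s ∈ S, χ s) := by
    refine IsIntegral.sum _ fun s _ => ⟨X ^ n - 1, monic_X_pow_sub_C 1 hn.ne', ?_⟩
    simp [hroot s]
  rw [hTq] at hint
  have : IsIntegral ℤ q := by
    rwa [show ((q : ℂ)) = algebraMap ℚ ℂ q by norm_cast,
      isIntegral_algebraMap_iff (algebraMap ℚ ℂ).injective] at hint
  obtain ⟨z, hz⟩ := IsIntegrallyClosed.isIntegral_iff.mp this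
  exact ⟨z, by rw [hTq, ← hz]; norm_cast⟩
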